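/- Let f : ℝ^{n+1}_+ → ℝ be measurable, α > 0, and for x ∈ ℝⁿ define C(f)(x) = sup_{B ∋ x} (|B|⁻¹ ∫_{B̂} |f(y,t)|² dy dt/t)^{1/2} (supremum over balls containing x, B̂ the tent over B) and the truncated cone square function A_h^{(α)}(f)(x) = (∫₀^h ∫_{|x−y|<αt} |f(y,t)|² dy dt/t^{n+1})^{1/2}. Then C(f)(x) ≂ sup_{B ∋ x} (|B|⁻¹ ∫_B A_{r(B)}^{(α)}(f)(z)² dz)^{1/2}, with implicit constants depending only on α and n. -/

import Mathlib

open MeasureTheory ENNReal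

/-- The square of the truncated cone square function
`A_h^{(α)}(f)(x)² = ∫₀^h ∫_{|x−y|<αt} |f(y,t)|² dy dt / t^{n+1}`. -/
noncomputable def coneSq (n : ℕ) (α h : ℝ) (f : EuclideanSpace ℝ (Fin n) × ℝ → ℝ)
    (x : EuclideanSpace ℝ (Fin n)) : ℝ≥0∞ :=
  ∫⁻ p in {p : EuclideanSpace ℝ (Fin n) × ℝ | 0 < p.2 ∧ p.2 < h ∧ dist x p.1 < α * p.2},
    ENNReal.ofReal (f p ^ 2 / p.2 ^ (n + 1))

/-- The Carleson-type functional
`C(f)(x) = sup_{B ∋ x} (|B|⁻¹ ∫_{B̂} |f(y,t)|² dy dt / t)^{1/2}`, the supremum being over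
balls containing `x` and `B̂` denoting the tent over `B`. -/
noncomputable def carlesonC (n : ℕ) (f : EuclideanSpace ℝ (Fin n) × ℝ → ℝ)
    (x : EuclideanSpace ℝ (Fin n)) : ℝ≥0∞ :=
  ⨆ (z : EuclideanSpace ℝ (Fin n)) (ρ : ℝ) (_ : 0 < ρ) (_ : x ∈ Metric.ball z ρ),
    ((volume (Metric.ball z ρ))⁻¹ *
      ∫⁻ p in {p : EuclideanSpace ℝ (Fin n) × ℝ | 0 < p.2 ∧ dist z p.1 + p.2 < ρ},
        ENNReal.ofReal (f p ^ 2 / p.2)) ^ (1 / 2 : ℝ)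

/-- The averaged truncated cone functional
`sup_{B ∋ x} (|B|⁻¹ ∫_B A_{r(B)}^{(α)}(f)(z)² dz)^{1/2}`. -/
noncomputable def avgConeC (n : ℕ) (α : ℝ) (f : EuclideanSpace ℝ (Fin n) × ℝ → ℝ)
    (x : EuclideanSpace ℝ (Fin n)) : ℝ≥0∞ :=
  ⨆ (z : EuclideanSpace ℝ (Fin n)) (ρ : ℝ) (_ : 0 < ρ) (_ : x ∈ Metric.ball z ρ),
    ((volume (Metric.ball z ρ))⁻¹ * ∫⁻ y in Metric.ball z ρ, coneSq n α ρ f y) ^ (1 / 2 : ℝ)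

private lemma vol_ball (n : ℕ) (x : EuclideanSpace ℝ (Fin n)) {r : ℝ} (hr : 0 < r) :
    volume (Metric.ball x r)
      = ENNReal.ofReal (r ^ n) * volume (Metric.ball (0 : EuclideanSpace ℝ (Fin n)) 1) := by
  cases n with
  | zero =>
      have h1 : ∀ (y : EuclideanSpace ℝ (Fin 0)) (s : ℝ), 0 < s → Metric.ball y s = Set.univ := by
        intro y s hs
        ext w
        simp [Metric.mem_ball, Subsingleton.elim w y, hs]
      rw [h1 x r hr, h1 0 1 one_pos]
      simp
  | succ m =>
      rw [Measure.addHaar_ball volume x hr.le, finrank_euclideanSpace_fin]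

private lemma tent_meas (n : ℕ) (z : EuclideanSpace ℝ (Fin n)) (r : ℝ) :
    MeasurableSet {p : EuclideanSpace ℝ (Fin n) × ℝ | 0 < p.2 ∧ dist z p.1 + p.2 < r} := by
  have h1 : {p : EuclideanSpace ℝ (Fin n) × ℝ | 0 < p.2 ∧ dist z p.1 + p.2 < r}
      = {p : EuclideanSpace ℝ (Fin n) × ℝ | 0 < p.2} ∩ {p | dist z p.1 + p.2 < r} := by
    ext q; simp
  rw [h1]
  exact ((isOpen_lt continuous_const continuous_snd).inter
    (isOpen_lt ((continuous_const.dist continuous_fst).add continuous_snd)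
      continuous_const)).measurableSet

private lemma pt_eq (n : ℕ) {α : ℝ} (hα : 0 < α) (f : EuclideanSpace ℝ (Fin n) × ℝ → ℝ)
    (p : EuclideanSpace ℝ (Fin n) × ℝ) (ht : 0 < p.2) :
    ENNReal.ofReal (f p ^ 2 / p.2 ^ (n + 1)) * volume (Metric.ball p.1 (α * p.2))
      = ENNReal.ofReal (α ^ n) * volume (Metric.ball (0 : EuclideanSpace ℝ (Fin n)) 1) *
          ENNReal.ofReal (f p ^ 2 / p.2) := by
  have h1 : (0:ℝ) ≤ f p ^ 2 / p.2 ^ (n + 1) := div_nonneg (sq_nonneg _) (pow_nonneg ht.le _)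
  have h2 : (0:ℝ) ≤ α ^ n := pow_nonneg hα.le _
  have ht' : p.2 ≠ 0 := ht.ne'
  have h3 : f p ^ 2 / p.2 ^ (n + 1) * (α * p.2) ^ n = α ^ n * (f p ^ 2 / p.2) := by
    rw [mul_pow, pow_succ]
    field_simp
    ring
  rw [vol_ball n p.1 (mul_pos hα ht), ← mul_assoc, ← ENNReal.ofReal_mul h1, h3,
    ENNReal.ofReal_mul h2]
  ring

private lemma key (n : ℕ) (α h ρ : ℝ) (z : EuclideanSpace ℝ (Fin n))
    (f : EuclideanSpace ℝ (Fin n) × ℝ → ℝ) (hf : Measurable f) :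
    ∫⁻ y in Metric.ball z ρ, coneSq n α h f y
      = ∫⁻ p in {p : EuclideanSpace ℝ (Fin n) × ℝ | 0 < p.2 ∧ p.2 < h},
          ENNReal.ofReal (f p ^ 2 / p.2 ^ (n + 1)) *
            volume (Metric.ball z ρ ∩ Metric.ball p.1 (α * p.2)) := by
  classical
  set g : EuclideanSpace ℝ (Fin n) × ℝ → ℝ≥0∞ :=
    fun p => ENNReal.ofReal (f p ^ 2 / p.2 ^ (n + 1)) with hg
  have hgm : Measurable g :=
    ((hf.pow_const 2).div (measurable_snd.pow_const (n + 1))).ennreal_ofReal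
  set U : Set (EuclideanSpace ℝ (Fin n) × (EuclideanSpace ℝ (Fin n) × ℝ)) :=
    {q | 0 < q.2.2 ∧ q.2.2 < h ∧ dist q.1 q.2.1 < α * q.2.2} with hU
  have hUopen : IsOpen U := by
    have h1 : U = {q : EuclideanSpace ℝ (Fin n) × (EuclideanSpace ℝ (Fin n) × ℝ) | 0 < q.2.2}
        ∩ ({q | q.2.2 < h} ∩ {q | dist q.1 q.2.1 < α * q.2.2}) := by
      ext q; simp [hU, and_assoc]
    rw [h1]
    exact (isOpen_lt continuous_const continuous_snd.snd).inter
      ((isOpen_lt continuous_snd.snd continuous_const).inter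
        (isOpen_lt (continuous_fst.dist continuous_snd.fst)
          (continuous_const.mul continuous_snd.snd)))
  have hT : MeasurableSet {p : EuclideanSpace ℝ (Fin n) × ℝ | 0 < p.2 ∧ p.2 < h} := by
    have h2 : {p : EuclideanSpace ℝ (Fin n) × ℝ | 0 < p.2 ∧ p.2 < h}
        = {p : EuclideanSpace ℝ (Fin n) × ℝ | 0 < p.2} ∩ {p | p.2 < h} := by ext q; simp
    rw [h2]
    exact ((isOpen_lt continuous_const continuous_snd).inter
      (isOpen_lt continuous_snd continuous_const)).measurableSet
  have hcone : ∀ y, coneSq n α h f y = ∫⁻ p, U.indicator (fun q => g q.2) (y, p) := by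
    intro y
    have hSy : MeasurableSet {p : EuclideanSpace ℝ (Fin n) × ℝ |
        0 < p.2 ∧ p.2 < h ∧ dist y p.1 < α * p.2} := by
      have he : {p : EuclideanSpace ℝ (Fin n) × ℝ | 0 < p.2 ∧ p.2 < h ∧ dist y p.1 < α * p.2}
          = (fun p => (y, p)) ⁻¹' U := rfl
      rw [he]
      exact hUopen.measurableSet.preimage measurable_prodMk_left
    rw [coneSq, ← lintegral_indicator hSy]
    apply lintegral_congr
    intro p
    simp only [Set.indicator_apply, Set.mem_setOf_eq, hU, hg]
  calc ∫⁻ y in Metric.ball z ρ, coneSq n α h f y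
      = ∫⁻ y in Metric.ball z ρ, ∫⁻ p, U.indicator (fun q => g q.2) (y, p) := by
        simp only [hcone]
    _ = ∫⁻ p, ∫⁻ y in Metric.ball z ρ, U.indicator (fun q => g q.2) (y, p) := by
        apply lintegral_lintegral_swap
        exact ((hgm.comp measurable_snd).indicator hUopen.measurableSet).aemeasurable
    _ = ∫⁻ p, Set.indicator {p : EuclideanSpace ℝ (Fin n) × ℝ | 0 < p.2 ∧ p.2 < h}
          (fun p => g p * volume (Metric.ball z ρ ∩ Metric.ball p.1 (α * p.2))) p := by
        apply lintegral_congr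
        intro p
        by_cases hp : 0 < p.2 ∧ p.2 < h
        · have hfun : (fun y => U.indicator (fun q => g q.2) (y, p))
              = (Metric.ball p.1 (α * p.2)).indicator (fun _ => g p) := by
            funext y
            by_cases hy : dist y p.1 < α * p.2 <;>
              simp [Set.indicator_apply, hU, hp.1, hp.2, hy, Metric.mem_ball]
          rw [hfun, lintegral_indicator measurableSet_ball, setLIntegral_const,
            Measure.restrict_apply measurableSet_ball, Set.inter_comm]
          exact (Set.indicator_of_mem
            (show p ∈ {p : EuclideanSpace ℝ (Fin n) × ℝ | 0 < p.2 ∧ p.2 < h} from hp)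
            (fun p => g p * volume (Metric.ball z ρ ∩ Metric.ball p.1 (α * p.2)))).symm
        · have hfun : (fun y => U.indicator (fun q => g q.2) (y, p))
              = fun _ => (0 : ℝ≥0∞) := by
            funext y
            rw [Set.indicator_apply, if_neg]
            intro hc
            exact hp ⟨hc.1, hc.2.1⟩
          rw [hfun,
            Set.indicator_of_notMem
              (show p ∉ {p : EuclideanSpace ℝ (Fin n) × ℝ | 0 < p.2 ∧ p.2 < h} from hp)
              (fun p => g p * volume (Metric.ball z ρ ∩ Metric.ball p.1 (α * p.2)))]
          simp
    _ = _ := lintegral_indicator hT _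

/-- `C(f)(x) ≂ sup_{B ∋ x} (|B|⁻¹ ∫_B A_{r(B)}^{(α)}(f)²)^{1/2}` with implicit constants
depending only on `α` and `n`. -/
theorem stmt13 (n : ℕ) (α : ℝ) (hα : 0 < α) :
    ∃ c₁ c₂ : ℝ, 0 < c₁ ∧ 0 < c₂ ∧
      ∀ f : EuclideanSpace ℝ (Fin n) × ℝ → ℝ, Measurable f →
        ∀ x : EuclideanSpace ℝ (Fin n),
          ENNReal.ofReal c₁ * carlesonC n f x ≤ avgConeC n α f x ∧
          avgConeC n α f x ≤ ENNReal.ofReal c₂ * carlesonC n f x := by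
  classical
  set κ := volume (Metric.ball (0 : EuclideanSpace ℝ (Fin n)) 1) with hκdef
  have hκ0 : κ ≠ 0 := (Metric.measure_ball_pos volume _ one_pos).ne'
  have hκt : κ ≠ ⊤ := measure_ball_lt_top.ne
  set A : ℝ≥0∞ := ENNReal.ofReal (α ^ n) with hA
  have hA0 : A ≠ 0 := (ENNReal.ofReal_pos.2 (pow_pos hα n)).ne'
  have hAt : A ≠ ⊤ := ENNReal.ofReal_ne_top
  set a₁ : ℝ≥0∞ := ENNReal.ofReal ((1 + α) ^ n) with ha₁
  have ha₁0 : a₁ ≠ 0 := (ENNReal.ofReal_pos.2 (pow_pos (by linarith) n)).ne'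
  have ha₁t : a₁ ≠ ⊤ := ENNReal.ofReal_ne_top
  set a₂ : ℝ≥0∞ := ENNReal.ofReal ((2 + α) ^ n) with ha₂
  have ha₂0 : a₂ ≠ 0 := (ENNReal.ofReal_pos.2 (pow_pos (by linarith) n)).ne'
  have ha₂t : a₂ ≠ ⊤ := ENNReal.ofReal_ne_top
  set C₁ : ℝ≥0∞ := a₁⁻¹ * (A * κ) with hC₁
  set C₂ : ℝ≥0∞ := a₂ * (A * κ) with hC₂
  have hC₁0 : C₁ ≠ 0 := mul_ne_zero (ENNReal.inv_ne_zero.2 ha₁t) (mul_ne_zero hA0 hκ0)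
  have hC₁t : C₁ ≠ ⊤ := ENNReal.mul_ne_top (ENNReal.inv_ne_top.2 ha₁0) (ENNReal.mul_ne_top hAt hκt)
  have hC₂0 : C₂ ≠ 0 := mul_ne_zero ha₂0 (mul_ne_zero hA0 hκ0)
  have hC₂t : C₂ ≠ ⊤ := ENNReal.mul_ne_top ha₂t (ENNReal.mul_ne_top hAt hκt)
  have hh₁0 : C₁ ^ (1 / 2 : ℝ) ≠ 0 := (ENNReal.rpow_pos (pos_iff_ne_zero.2 hC₁0) hC₁t).ne'
  have hh₁t : C₁ ^ (1 / 2 : ℝ) ≠ ⊤ := ENNReal.rpow_ne_top_of_nonneg (by norm_num) hC₁t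
  have hh₂0 : C₂ ^ (1 / 2 : ℝ) ≠ 0 := (ENNReal.rpow_pos (pos_iff_ne_zero.2 hC₂0) hC₂t).ne'
  have hh₂t : C₂ ^ (1 / 2 : ℝ) ≠ ⊤ := ENNReal.rpow_ne_top_of_nonneg (by norm_num) hC₂t
  refine ⟨(C₁ ^ (1 / 2 : ℝ)).toReal, (C₂ ^ (1 / 2 : ℝ)).toReal,
    ENNReal.toReal_pos hh₁0 hh₁t, ENNReal.toReal_pos hh₂0 hh₂t, ?_⟩
  intro f hf x
  constructor
  · -- lower bound
    rw [ENNReal.ofReal_toReal hh₁t, carlesonC, avgConeC]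
    simp only [ENNReal.mul_iSup]
    refine iSup_le fun z => iSup_le fun ρ => iSup_le fun hρ => iSup_le fun hx => ?_
    have hρ' : 0 < (1 + α) * ρ := mul_pos (by linarith) hρ
    have hxball : x ∈ Metric.ball z ((1 + α) * ρ) := by
      rw [Metric.mem_ball] at hx ⊢
      nlinarith [mul_pos hα hρ]
    set T := {p : EuclideanSpace ℝ (Fin n) × ℝ | 0 < p.2 ∧ dist z p.1 + p.2 < ρ} with hTdef
    set I := ∫⁻ p in T, ENNReal.ofReal (f p ^ 2 / p.2) with hIdef
    have hIbound : A * κ * I ≤ ∫⁻ y in Metric.ball z ((1 + α) * ρ), coneSq n α ((1 + α) * ρ) f y := by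
      rw [key n α ((1 + α) * ρ) ((1 + α) * ρ) z f hf]
      have hsubset : T ⊆ {p : EuclideanSpace ℝ (Fin n) × ℝ | 0 < p.2 ∧ p.2 < (1 + α) * ρ} := by
        intro p hp
        obtain ⟨h1, h2⟩ := hp
        have hd : 0 ≤ dist z p.1 := dist_nonneg
        exact ⟨h1, by nlinarith [mul_pos hα hρ]⟩
      refine le_trans ?_ (lintegral_mono_set hsubset)
      have heq : ∫⁻ p in T, ENNReal.ofReal (f p ^ 2 / p.2 ^ (n + 1)) *
            volume (Metric.ball z ((1 + α) * ρ) ∩ Metric.ball p.1 (α * p.2))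
          = ∫⁻ p in T, A * κ * ENNReal.ofReal (f p ^ 2 / p.2) := by
        refine setLIntegral_congr_fun (by rw [hTdef]; exact tent_meas n z ρ)
          (fun p hp => ?_)
        obtain ⟨h1, h2⟩ := hp
        have hpρ : p.2 < ρ := by nlinarith [dist_nonneg (x := z) (y := p.1)]
        have hball : Metric.ball p.1 (α * p.2) ⊆ Metric.ball z ((1 + α) * ρ) := by
          intro y hy
          rw [Metric.mem_ball] at hy ⊢
          have h3 : dist y z ≤ dist y p.1 + dist p.1 z := dist_triangle _ _ _
          have h4 : dist p.1 z = dist z p.1 := dist_comm _ _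
          have h5 : α * p.2 < α * ρ := mul_lt_mul_of_pos_left hpρ hα
          nlinarith
        rw [Set.inter_eq_self_of_subset_right hball, pt_eq n hα f p h1, hA, hκdef]
      rw [heq, lintegral_const_mul' (A * κ) _ (ENNReal.mul_ne_top hAt hκt)]
    have hV' : volume (Metric.ball z ((1 + α) * ρ)) = a₁ * volume (Metric.ball z ρ) := by
      rw [vol_ball n z hρ', vol_ball n z hρ, ha₁, mul_pow,
        ENNReal.ofReal_mul (pow_nonneg (by linarith) n), ← hκdef]
      ring
    refine le_trans ?_ (le_iSup_of_le z (le_iSup_of_le ((1 + α) * ρ)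
      (le_iSup_of_le hρ' (le_iSup_of_le hxball le_rfl))))
    rw [← ENNReal.mul_rpow_of_nonneg _ _ (by norm_num : (0:ℝ) ≤ 1 / 2)]
    refine ENNReal.rpow_le_rpow ?_ (by norm_num)
    have hkey2 : C₁ * ((volume (Metric.ball z ρ))⁻¹ * I)
        = (volume (Metric.ball z ((1 + α) * ρ)))⁻¹ * (A * κ * I) := by
      rw [hV', ENNReal.mul_inv (Or.inl ha₁0) (Or.inl ha₁t), hC₁]
      ring
    rw [hkey2]
    exact mul_le_mul_right hIbound _
  · -- upper bound
    rw [ENNReal.ofReal_toReal hh₂t, avgConeC]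
    refine iSup_le fun z => iSup_le fun ρ => iSup_le fun hρ => iSup_le fun hx => ?_
    have hρ'' : 0 < (2 + α) * ρ := mul_pos (by linarith) hρ
    have hxball : x ∈ Metric.ball z ((2 + α) * ρ) := by
      rw [Metric.mem_ball] at hx ⊢
      nlinarith [mul_pos hα hρ]
    set T := {p : EuclideanSpace ℝ (Fin n) × ℝ | 0 < p.2 ∧ dist z p.1 + p.2 < (2 + α) * ρ}
      with hTdef
    set I := ∫⁻ p in T, ENNReal.ofReal (f p ^ 2 / p.2) with hIdef
    have hJ : (∫⁻ y in Metric.ball z ρ, coneSq n α ρ f y) ≤ A * κ * I := by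
      rw [key n α ρ ρ z f hf]
      have hstep : ∀ p ∈ {p : EuclideanSpace ℝ (Fin n) × ℝ | 0 < p.2 ∧ p.2 < ρ},
          ENNReal.ofReal (f p ^ 2 / p.2 ^ (n + 1)) *
              volume (Metric.ball z ρ ∩ Metric.ball p.1 (α * p.2))
            ≤ T.indicator (fun p => A * κ * ENNReal.ofReal (f p ^ 2 / p.2)) p := by
        intro p hp
        obtain ⟨h1, h2⟩ := hp
        rcases eq_or_ne (volume (Metric.ball z ρ ∩ Metric.ball p.1 (α * p.2))) 0 with hv | hv
        · rw [hv, mul_zero]; exact zero_le'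
        · obtain ⟨y, hy1, hy2⟩ := nonempty_of_measure_ne_zero hv
          have hpT : p ∈ T := by
            refine ⟨h1, ?_⟩
            rw [Metric.mem_ball] at hy1 hy2
            have h3 : dist z p.1 ≤ dist z y + dist y p.1 := dist_triangle _ _ _
            have h4 : dist z y = dist y z := dist_comm _ _
            have h5 : α * p.2 < α * ρ := mul_lt_mul_of_pos_left h2 hα
            nlinarith
          rw [Set.indicator_of_mem hpT]
          calc ENNReal.ofReal (f p ^ 2 / p.2 ^ (n + 1)) *
                volume (Metric.ball z ρ ∩ Metric.ball p.1 (α * p.2))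
              ≤ ENNReal.ofReal (f p ^ 2 / p.2 ^ (n + 1)) * volume (Metric.ball p.1 (α * p.2)) :=
                mul_le_mul_right (measure_mono Set.inter_subset_right) _
            _ = A * κ * ENNReal.ofReal (f p ^ 2 / p.2) := by
                rw [pt_eq n hα f p h1, hA, hκdef]
      have hmeas : Measurable (T.indicator
          (fun p : EuclideanSpace ℝ (Fin n) × ℝ => A * κ * ENNReal.ofReal (f p ^ 2 / p.2))) := by
        refine Measurable.indicator ?_ (by rw [hTdef]; exact tent_meas n z ((2 + α) * ρ))
        exact (((hf.pow_const 2).div measurable_snd).ennreal_ofReal).const_mul (A * κ)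
      calc ∫⁻ p in {p : EuclideanSpace ℝ (Fin n) × ℝ | 0 < p.2 ∧ p.2 < ρ},
            ENNReal.ofReal (f p ^ 2 / p.2 ^ (n + 1)) *
              volume (Metric.ball z ρ ∩ Metric.ball p.1 (α * p.2))
          ≤ ∫⁻ p in {p : EuclideanSpace ℝ (Fin n) × ℝ | 0 < p.2 ∧ p.2 < ρ},
              T.indicator (fun p => A * κ * ENNReal.ofReal (f p ^ 2 / p.2)) p :=
            setLIntegral_mono hmeas hstep
        _ ≤ ∫⁻ p, T.indicator (fun p => A * κ * ENNReal.ofReal (f p ^ 2 / p.2)) p :=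
            setLIntegral_le_lintegral _ _
        _ = ∫⁻ p in T, A * κ * ENNReal.ofReal (f p ^ 2 / p.2) :=
            lintegral_indicator (by rw [hTdef]; exact tent_meas n z ((2 + α) * ρ)) _
        _ = A * κ * I := by
            rw [lintegral_const_mul' (A * κ) _ (ENNReal.mul_ne_top hAt hκt)]
    have hV'' : volume (Metric.ball z ((2 + α) * ρ)) = a₂ * volume (Metric.ball z ρ) := by
      rw [vol_ball n z hρ'', vol_ball n z hρ, ha₂, mul_pow,
        ENNReal.ofReal_mul (pow_nonneg (by linarith) n), ← hκdef]
      ring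
    have hcar : ((volume (Metric.ball z ((2 + α) * ρ)))⁻¹ * I) ^ (1 / 2 : ℝ)
        ≤ carlesonC n f x := by
      rw [carlesonC]
      refine le_iSup_of_le z (le_iSup_of_le ((2 + α) * ρ)
        (le_iSup_of_le hρ'' (le_iSup_of_le hxball ?_)))
      rw [hIdef, hTdef]
    calc ((volume (Metric.ball z ρ))⁻¹ * ∫⁻ y in Metric.ball z ρ, coneSq n α ρ f y) ^ (1 / 2 : ℝ)
        ≤ ((volume (Metric.ball z ρ))⁻¹ * (A * κ * I)) ^ (1 / 2 : ℝ) :=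
          ENNReal.rpow_le_rpow (mul_le_mul_right hJ _) (by norm_num)
      _ = (C₂ * ((volume (Metric.ball z ((2 + α) * ρ)))⁻¹ * I)) ^ (1 / 2 : ℝ) := by
          congr 1
          rw [hV'', ENNReal.mul_inv (Or.inl ha₂0) (Or.inl ha₂t), hC₂]
          have hr : a₂ * (A * κ) * (a₂⁻¹ * (volume (Metric.ball z ρ))⁻¹ * I)
              = (a₂ * a₂⁻¹) * ((volume (Metric.ball z ρ))⁻¹ * (A * κ * I)) := by ring
          rw [hr, ENNReal.mul_inv_cancel ha₂0 ha₂t, one_mul]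
      _ = C₂ ^ (1 / 2 : ℝ) * ((volume (Metric.ball z ((2 + α) * ρ)))⁻¹ * I) ^ (1 / 2 : ℝ) :=
          ENNReal.mul_rpow_of_nonneg _ _ (by norm_num)
      _ ≤ C₂ ^ (1 / 2 : ℝ) * carlesonC n f x := mul_le_mul_right hcar _
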